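/- Let T₁, ..., T_d be commuting contractions on H with product T = T₁⋯T_d, and let Q² = SOT-lim T^n T*^n. Then for each i, T_i Q² T_i* ≤ Q², and hence there exists a contraction X_i* on closure(Ran Q) satisfying X_i* Q = Q T_i*. -/

import Mathlib

open ContinuousLinearMap Filter

/-- The closure of the range of an operator, as a submodule. -/
noncomputable def ranClosure {H : Type*} [NormedAddCommGroup H] [InnerProductSpace ℂ H]
    (Q : H →L[ℂ] H) : Submodule ℂ H :=
  (LinearMap.range (Q : H →ₗ[ℂ] H)).topologicalClosure

theorem mem_ranClosure {H : Type*} [NormedAddCommGroup H] [InnerProductSpace ℂ H]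
    (Q : H →L[ℂ] H) (h : H) : Q h ∈ ranClosure Q :=
  Submodule.le_topologicalClosure _ ⟨h, rfl⟩

set_option maxHeartbeats 1000000 in
/-- Let `T 0, …, T (d-1)` be commuting contractions with product `P`, and `Q ≥ 0` with
`Q² = SOT-lim P^n P*^n`. Then for each `i`, `T_i Q² T_i* ≤ Q²`, and there is a contraction
`X_i*` on `closure(Ran Q)` with `X_i* Q = Q T_i*`. -/
theorem stmt6 {H : Type*} [NormedAddCommGroup H] [InnerProductSpace ℂ H] [CompleteSpace H]
    (d : ℕ) (hd : 1 ≤ d) (T : Fin d → H →L[ℂ] H)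
    (hT : ∀ i, ‖T i‖ ≤ 1) (hcomm : ∀ i j, Commute (T i) (T j))
    (Q : H →L[ℂ] H) (hQpos : Q.IsPositive)
    (hQ : ∀ h : H, Tendsto
      (fun n : ℕ => (((List.ofFn T).prod) ^ n * (adjoint ((List.ofFn T).prod)) ^ n) h)
      atTop (nhds ((Q * Q) h))) :
    ∀ i : Fin d,
      (∀ h : H, ‖Q (adjoint (T i) h)‖ ^ 2 ≤ ‖Q h‖ ^ 2) ∧
      ∃ X : ranClosure Q →L[ℂ] ranClosure Q, ‖X‖ ≤ 1 ∧
        ∀ h : H, ((X ⟨Q h, mem_ranClosure Q h⟩ : ranClosure Q) : H) = Q (adjoint (T i) h) := by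
  intro i
  set P : H →L[ℂ] H := (List.ofFn T).prod with hPdef
  have hcommP : Commute (T i) P := by
    apply Commute.list_prod_right
    intro b hb
    obtain ⟨j, rfl⟩ := Set.mem_range.mp ((List.mem_ofFn' T b).mp hb)
    exact hcomm i j
  have hcommA : Commute (adjoint (T i)) (adjoint P) := by
    have := hcommP.symm
    rw [Commute, SemiconjBy] at this ⊢
    rw [← star_eq_adjoint, ← star_eq_adjoint, ← star_mul, ← star_mul, this]
  -- key limit : ‖(adjoint P)^n x‖² → ‖Q x‖²
  have key : ∀ x : H, Tendsto (fun n : ℕ => ‖((adjoint P) ^ n) x‖ ^ 2)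
      atTop (nhds (‖Q x‖ ^ 2)) := by
    intro x
    have h1 : Tendsto (fun n : ℕ => RCLike.re (inner ℂ ((P ^ n * (adjoint P) ^ n) x) x : ℂ))
        atTop (nhds (RCLike.re (inner ℂ ((Q * Q) x) x : ℂ))) := by
      have cont : Continuous (fun y : H => RCLike.re (inner ℂ y x : ℂ)) :=
        RCLike.continuous_re.comp (continuous_id.inner continuous_const)
      exact (cont.continuousAt.tendsto.comp (hQ x)).congr (fun n => rfl)
    have h2 : ∀ n : ℕ, RCLike.re (inner ℂ ((P ^ n * (adjoint P) ^ n) x) x : ℂ)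
        = ‖((adjoint P) ^ n) x‖ ^ 2 := by
      intro n
      have hpn : (P ^ n : H →L[ℂ] H) = adjoint ((adjoint P) ^ n) := by
        rw [← star_eq_adjoint, ← star_eq_adjoint, star_pow, star_star]
      have : ((P ^ n * (adjoint P) ^ n) x) = adjoint ((adjoint P) ^ n) (((adjoint P) ^ n) x) := by
        rw [← hpn]; rfl
      rw [this, adjoint_inner_left, inner_self_eq_norm_sq]
    have h3 : RCLike.re (inner ℂ ((Q * Q) x) x : ℂ) = ‖Q x‖ ^ 2 := by
      have hq : ((Q * Q) x) = adjoint Q (Q x) := by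
        rw [hQpos.isSelfAdjoint.adjoint_eq]; rfl
      rw [hq, adjoint_inner_left, inner_self_eq_norm_sq]
    rw [h3] at h1
    exact h1.congr (fun n => h2 n)
  -- the pointwise inequality
  have hptwise : ∀ (h : H) (n : ℕ),
      ‖((adjoint P) ^ n) (adjoint (T i) h)‖ ^ 2 ≤ ‖((adjoint P) ^ n) h‖ ^ 2 := by
    intro h n
    have hc : ((adjoint P) ^ n) (adjoint (T i) h) = (adjoint (T i)) (((adjoint P) ^ n) h) := by
      have this : (adjoint P) ^ n * adjoint (T i) = adjoint (T i) * (adjoint P) ^ n :=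
        (hcommA.symm.pow_left n).eq
      calc ((adjoint P) ^ n) (adjoint (T i) h) = ((adjoint P) ^ n * adjoint (T i)) h := rfl
        _ = (adjoint (T i) * (adjoint P) ^ n) h := by rw [this]
        _ = (adjoint (T i)) (((adjoint P) ^ n) h) := rfl
    rw [hc]
    have hnorm : ‖(adjoint (T i)) (((adjoint P) ^ n) h)‖ ≤ ‖((adjoint P) ^ n) h‖ := by
      calc ‖(adjoint (T i)) (((adjoint P) ^ n) h)‖
          ≤ ‖adjoint (T i)‖ * ‖((adjoint P) ^ n) h‖ := le_opNorm _ _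
        _ ≤ 1 * ‖((adjoint P) ^ n) h‖ := by
            apply mul_le_mul_of_nonneg_right _ (norm_nonneg _)
            rw [← star_eq_adjoint, norm_star]; exact hT i
        _ = ‖((adjoint P) ^ n) h‖ := one_mul _
    exact pow_le_pow_left₀ (norm_nonneg _) hnorm 2
  have part1 : ∀ h : H, ‖Q (adjoint (T i) h)‖ ^ 2 ≤ ‖Q h‖ ^ 2 := fun h =>
    le_of_tendsto_of_tendsto' (key (adjoint (T i) h)) (key h) (hptwise h)
  refine ⟨part1, ?_⟩
  have hle : ∀ h : H, ‖Q (adjoint (T i) h)‖ ≤ ‖Q h‖ := by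
    intro h
    have := part1 h
    nlinarith [norm_nonneg (Q (adjoint (T i) h)), norm_nonneg (Q h)]
  -- construct the contraction X on ranClosure Q
  set R : Submodule ℂ H := LinearMap.range (Q : H →ₗ[ℂ] H) with hRdef
  have hker : LinearMap.ker (Q : H →ₗ[ℂ] H)
      ≤ LinearMap.ker ((Q.comp (adjoint (T i)) : H →L[ℂ] H) : H →ₗ[ℂ] H) := by
    intro x hx
    rw [LinearMap.mem_ker] at hx ⊢
    have h0 : ‖Q (adjoint (T i) x)‖ ≤ ‖Q x‖ := hle x
    have : Q x = 0 := hx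
    rw [this, norm_zero] at h0
    have : Q (adjoint (T i) x) = 0 := norm_le_zero_iff.mp h0
    exact this
  set φ : (H ⧸ LinearMap.ker (Q : H →ₗ[ℂ] H)) →ₗ[ℂ] H :=
    Submodule.liftQ _ ((Q.comp (adjoint (T i)) : H →L[ℂ] H) : H →ₗ[ℂ] H) hker with hφdef
  set e0 := LinearMap.quotKerEquivRange (Q : H →ₗ[ℂ] H) with he0def
  set f₀ : R →ₗ[ℂ] H := φ.comp (e0.symm : R →ₗ[ℂ] (H ⧸ LinearMap.ker (Q : H →ₗ[ℂ] H)))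
    with hf₀def
  have hf₀ : ∀ h : H, f₀ ⟨Q h, ⟨h, rfl⟩⟩ = Q (adjoint (T i) h) := by
    intro h
    have he0 : e0 (Submodule.Quotient.mk h) = ⟨Q h, ⟨h, rfl⟩⟩ := by
      apply Subtype.ext
      simp [he0def, LinearMap.quotKerEquivRange_apply_mk]
    have : e0.symm ⟨Q h, ⟨h, rfl⟩⟩ = Submodule.Quotient.mk h := by
      rw [← he0, LinearEquiv.symm_apply_apply]
    simp only [hf₀def, LinearMap.comp_apply, LinearEquiv.coe_coe, this]
    simp [hφdef]
  have hmem : ∀ x : R, f₀ x ∈ ranClosure Q := by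
    rintro ⟨v, h, rfl⟩
    show f₀ ⟨Q h, ⟨h, rfl⟩⟩ ∈ ranClosure Q
    rw [hf₀ h]
    exact mem_ranClosure Q _
  set f₁ : R →ₗ[ℂ] ranClosure Q := LinearMap.codRestrict (ranClosure Q) f₀ hmem with hf₁def
  have hf₁bound : ∀ x : R, ‖f₁ x‖ ≤ 1 * ‖x‖ := by
    rintro ⟨v, h, rfl⟩
    show ‖(f₀ ⟨Q h, ⟨h, rfl⟩⟩ : H)‖ ≤ 1 * ‖Q h‖
    rw [hf₀ h, one_mul]
    exact hle h
  set f : R →L[ℂ] ranClosure Q := f₁.mkContinuous 1 hf₁bound with hfdef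
  have hfnorm : ‖f‖ ≤ 1 := LinearMap.mkContinuous_norm_le _ zero_le_one _
  -- the inclusion e : R →L ranClosure Q
  have hRle : R ≤ ranClosure Q := Submodule.le_topologicalClosure _
  set e : R →L[ℂ] ranClosure Q :=
    (Submodule.inclusion hRle).mkContinuous 1 (fun x => by rw [one_mul]; rfl) with hedef
  have hecoe : ∀ x : R, ((e x : ranClosure Q) : H) = (x : H) := fun x => rfl
  have h_e : ∀ x : R, ‖x‖ ≤ (1 : NNReal) * ‖e x‖ := by
    intro x; rw [NNReal.coe_one, one_mul]
    have : ‖e x‖ = ‖(x : H)‖ := rfl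
    rw [this]; rfl
  have h_dense : DenseRange e := by
    rintro ⟨y, hy⟩
    have hy' : y ∈ closure (R : Set H) := hy
    rw [mem_closure_iff_seq_limit] at hy'
    obtain ⟨x, hx, hlim⟩ := hy'
    have htend : Tendsto (fun n => e ⟨x n, hx n⟩) atTop (nhds ⟨y, hy⟩) := by
      rw [tendsto_subtype_rng]
      exact hlim
    exact mem_closure_of_tendsto htend (Filter.Eventually.of_forall fun n => ⟨⟨x n, hx n⟩, rfl⟩)
  haveI : CompleteSpace (ranClosure Q) :=
    (Submodule.isClosed_topologicalClosure _).completeSpace_coe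
  set X : ranClosure Q →L[ℂ] ranClosure Q :=
    f.extend e
    with hXdef
  refine ⟨X, ?_, ?_⟩
  · calc ‖X‖ ≤ (1 : NNReal) * ‖f‖ := ContinuousLinearMap.opNorm_extend_le (f := f) h_dense h_e
      _ ≤ 1 := by rw [NNReal.coe_one, one_mul]; exact hfnorm
  · intro h
    have hx : (⟨Q h, mem_ranClosure Q h⟩ : ranClosure Q) = e ⟨Q h, ⟨h, rfl⟩⟩ :=
      Subtype.ext rfl
    rw [hx, hXdef, ContinuousLinearMap.extend_eq f h_dense
      (ContinuousLinearMap.isUniformEmbedding_of_bound e h_e).isUniformInducing]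
    have : ((f ⟨Q h, ⟨h, rfl⟩⟩ : ranClosure Q) : H) = f₀ ⟨Q h, ⟨h, rfl⟩⟩ := rfl
    rw [this, hf₀ h]
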